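/- Let K be the field ℝ or ℂ, (V, B) a finite-dimensional symplectic vector space over K, and P : V → V a nilpotent linear operator self-adjoint with respect to B. Then every subspace W ⊆ V invariant under Aut(V, B, P) is a finite sum of subspaces of the form Ker P^k ∩ Im P^l: there exist s ∈ ℕ and integers k_i, l_i ≥ 0 (i = 1, …, s) such that W = Σ_{i=1}^s (Ker P^{k_i} ∩ Im P^{l_i}). -/

import Mathlib

/-- A submodule `W` is invariant under `Aut(V, B, P)`, the group of linear automorphisms
preserving the bilinear form `B` and commuting with the operator `P`. -/
def IsInvariantSubmodule {K V : Type*} [Field K] [AddCommGroup V] [Module K V]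
    (B : LinearMap.BilinForm K V) (P : Module.End K V) (W : Submodule K V) : Prop :=
  ∀ g : V ≃ₗ[K] V, (∀ u v : V, B (g u) (g v) = B u v) → (∀ v : V, g (P v) = P (g v)) →
    W.map (g : V →ₗ[K] V) = W

section Aux

variable {K V : Type*} [RCLike K] [AddCommGroup V] [Module K V]

/-- Iterated self-adjointness. -/
lemma iter_selfadj (B : LinearMap.BilinForm K V) (P : Module.End K V)
    (hP : ∀ u v : V, B (P u) v = B u (P v)) (j : ℕ) (u v : V) :
    B ((P ^ j) u) v = B u ((P ^ j) v) := by
  induction j generalizing u with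
  | zero => simp
  | succ m ih =>
      have h1 : (P ^ (m + 1)) u = (P ^ m) (P u) := by rw [pow_succ]; rfl
      have h2 : (P ^ (m + 1)) v = P ((P ^ m) v) := by rw [pow_succ']; rfl
      rw [h1, ih (P u), hP, h2]

lemma B_pow_self_zero (B : LinearMap.BilinForm K V) (P : Module.End K V)
    (hBalt : B.IsAlt) (hP : ∀ u v : V, B (P u) v = B u (P v)) (j k : ℕ) (a : V) :
    B ((P ^ j) a) ((P ^ k) a) = 0 := by
  have h1 : B ((P ^ j) a) ((P ^ k) a) = B a ((P ^ (j + k)) a) := by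
    rw [iter_selfadj B P hP j, ← Module.End.mul_apply, ← pow_add]
  have hsym : B ((P ^ (j + k)) a) a = B a ((P ^ (j + k)) a) :=
    iter_selfadj B P hP (j + k) a a
  have hneg : -B ((P ^ (j + k)) a) a = B a ((P ^ (j + k)) a) := hBalt.neg_eq _ _
  have h3 : (2 : K) * B a ((P ^ (j + k)) a) = 0 := by linear_combination - hsym - hneg
  rcases mul_eq_zero.mp h3 with h | h
  · exact absurd h two_ne_zero
  · rw [h1, h]

/-- The basic square-zero symplectic transvection-type operator. -/
noncomputable def TT (B : LinearMap.BilinForm K V) (P : Module.End K V) (r : ℕ) (a : V) :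
    Module.End K V :=
  ∑ i ∈ Finset.range r, LinearMap.smulRight (B.flip ((P ^ i) a)) ((P ^ (r - 1 - i)) a)

lemma TT_apply (B : LinearMap.BilinForm K V) (P : Module.End K V) (r : ℕ) (a u : V) :
    TT B P r a u = ∑ i ∈ Finset.range r, B u ((P ^ i) a) • (P ^ (r - 1 - i)) a := by
  simp [TT, LinearMap.sum_apply, LinearMap.smulRight_apply, LinearMap.flip_apply]

lemma TT_comm (B : LinearMap.BilinForm K V) (P : Module.End K V)
    (hP : ∀ u v : V, B (P u) v = B u (P v)) (r : ℕ) (a : V) (ha : (P ^ r) a = 0) (u : V) :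
    TT B P r a (P u) = P (TT B P r a u) := by
  rcases r with _ | s
  · simp [TT_apply]
  · rw [TT_apply, TT_apply, map_sum]
    have hL : ∑ i ∈ Finset.range (s + 1), B (P u) ((P ^ i) a) • (P ^ (s + 1 - 1 - i)) a
        = ∑ i ∈ Finset.range s, B u ((P ^ (i + 1)) a) • (P ^ (s - i)) a := by
      rw [Finset.sum_range_succ]
      have hz : B (P u) ((P ^ s) a) • (P ^ (s + 1 - 1 - s)) a = 0 := by
        have : B (P u) ((P ^ s) a) = B u ((P ^ (s + 1)) a) := by
          rw [hP]
          congr 1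
          rw [pow_succ']
          rfl
        rw [this, ha, LinearMap.map_zero, zero_smul]
      rw [hz, add_zero]
      apply Finset.sum_congr rfl
      intro i hi
      rw [Finset.mem_range] at hi
      have e1 : s + 1 - 1 - i = s - i := by omega
      have e2 : B (P u) ((P ^ i) a) = B u ((P ^ (i + 1)) a) := by
        rw [hP]
        congr 1
        rw [pow_succ']
        rfl
      rw [e1, e2]
    have hR : ∑ i ∈ Finset.range (s + 1), P (B u ((P ^ i) a) • (P ^ (s + 1 - 1 - i)) a)
        = ∑ i ∈ Finset.range s, B u ((P ^ (i + 1)) a) • (P ^ (s - i)) a := by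
      rw [Finset.sum_range_succ']
      have hz : P (B u ((P ^ 0) a) • (P ^ (s + 1 - 1 - 0)) a) = 0 := by
        rw [map_smul]
        have : P ((P ^ (s + 1 - 1 - 0)) a) = 0 := by
          have : P ((P ^ (s + 1 - 1 - 0)) a) = (P ^ (s + 1)) a := by
            rw [pow_succ']
            simp [Module.End.mul_apply]
          rw [this, ha]
        rw [this, smul_zero]
      rw [hz, add_zero]
      apply Finset.sum_congr rfl
      intro i hi
      rw [Finset.mem_range] at hi
      rw [map_smul]
      congr 1
      have : P ((P ^ (s + 1 - 1 - (i + 1))) a) = (P ^ (s - i)) a := by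
        have e : s - i = (s + 1 - 1 - (i + 1)) + 1 := by omega
        rw [e, pow_succ']
        rfl
      rw [this]
    rw [hL, hR]

lemma TT_skew (B : LinearMap.BilinForm K V) (P : Module.End K V)
    (hBalt : B.IsAlt) (r : ℕ) (a u v : V) :
    B (TT B P r a u) v + B u (TT B P r a v) = 0 := by
  rw [TT_apply, TT_apply]
  have h1 : B (∑ i ∈ Finset.range r, B u ((P ^ i) a) • (P ^ (r - 1 - i)) a) v
      = ∑ i ∈ Finset.range r, B u ((P ^ i) a) * B ((P ^ (r - 1 - i)) a) v := by
    rw [map_sum, LinearMap.sum_apply]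
    apply Finset.sum_congr rfl
    intro i _
    rw [map_smul, LinearMap.smul_apply, smul_eq_mul]
  have h2 : B u (∑ i ∈ Finset.range r, B v ((P ^ i) a) • (P ^ (r - 1 - i)) a)
      = ∑ i ∈ Finset.range r, B v ((P ^ i) a) * B u ((P ^ (r - 1 - i)) a) := by
    rw [map_sum]
    apply Finset.sum_congr rfl
    intro i _
    rw [map_smul, smul_eq_mul]
  rw [h1, h2]
  have h3 : ∑ i ∈ Finset.range r, B v ((P ^ i) a) * B u ((P ^ (r - 1 - i)) a)
      = ∑ i ∈ Finset.range r, B v ((P ^ (r - 1 - i)) a) * B u ((P ^ i) a) := by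
    rw [← Finset.sum_range_reflect]
    apply Finset.sum_congr rfl
    intro i hi
    rw [Finset.mem_range] at hi
    have e : r - 1 - (r - 1 - i) = i := by omega
    rw [e]
  rw [h3, ← Finset.sum_add_distrib]
  apply Finset.sum_eq_zero
  intro i _
  have hneg : B ((P ^ (r - 1 - i)) a) v = -B v ((P ^ (r - 1 - i)) a) :=
    (hBalt.neg_eq v ((P ^ (r - 1 - i)) a)).symm
  rw [hneg]
  ring

lemma TT_left_zero (B : LinearMap.BilinForm K V) (P : Module.End K V)
    (hBalt : B.IsAlt) (hP : ∀ u v : V, B (P u) v = B u (P v)) (r j : ℕ) (a u : V) :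
    B (TT B P r a u) ((P ^ j) a) = 0 := by
  rw [TT_apply, map_sum, LinearMap.sum_apply]
  apply Finset.sum_eq_zero
  intro i _
  rw [map_smul, LinearMap.smul_apply, smul_eq_mul,
    B_pow_self_zero B P hBalt hP, mul_zero]

lemma TT_isot (B : LinearMap.BilinForm K V) (P : Module.End K V)
    (hBalt : B.IsAlt) (hP : ∀ u v : V, B (P u) v = B u (P v)) (r : ℕ) (a u v : V) :
    B (TT B P r a u) (TT B P r a v) = 0 := by
  rw [TT_apply (u := v), map_sum]
  apply Finset.sum_eq_zero
  intro i _
  rw [map_smul, smul_eq_mul, TT_left_zero B P hBalt hP, mul_zero]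

lemma TT_sq (B : LinearMap.BilinForm K V) (P : Module.End K V)
    (hBalt : B.IsAlt) (hP : ∀ u v : V, B (P u) v = B u (P v)) (r : ℕ) (a u : V) :
    TT B P r a (TT B P r a u) = 0 := by
  rw [TT_apply (u := TT B P r a u)]
  apply Finset.sum_eq_zero
  intro i _
  rw [TT_left_zero B P hBalt hP, zero_smul]

/-- Invariance of `W` under the transvection operators. -/
lemma TT_mem (B : LinearMap.BilinForm K V) (P : Module.End K V)
    (hBalt : B.IsAlt) (hP : ∀ u v : V, B (P u) v = B u (P v))
    (W : Submodule K V) (hW : IsInvariantSubmodule B P W)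
    (r : ℕ) (a : V) (ha : (P ^ r) a = 0) (w : V) (hw : w ∈ W) :
    TT B P r a w ∈ W := by
  have hsq : ∀ u, TT B P r a (TT B P r a u) = 0 := fun u => TT_sq B P hBalt hP r a u
  have h1 : ((1 : Module.End K V) + TT B P r a).comp
      ((1 : Module.End K V) - TT B P r a) = LinearMap.id := by
    apply LinearMap.ext
    intro u
    simp only [LinearMap.comp_apply, LinearMap.sub_apply, LinearMap.add_apply,
      Module.End.one_apply, LinearMap.id_apply, map_sub, hsq, sub_zero]
    abel
  have h2 : ((1 : Module.End K V) - TT B P r a).comp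
      ((1 : Module.End K V) + TT B P r a) = LinearMap.id := by
    apply LinearMap.ext
    intro u
    simp only [LinearMap.comp_apply, LinearMap.sub_apply, LinearMap.add_apply,
      Module.End.one_apply, LinearMap.id_apply, map_add, hsq, add_zero]
    abel
  set g : V ≃ₗ[K] V := LinearEquiv.ofLinear ((1 : Module.End K V) + TT B P r a)
    ((1 : Module.End K V) - TT B P r a) h1 h2 with hg
  have hgapp : ∀ u, g u = u + TT B P r a u := by
    intro u
    rw [hg, LinearEquiv.ofLinear_apply, LinearMap.add_apply, Module.End.one_apply]
  have hsymp : ∀ u v : V, B (g u) (g v) = B u v := by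
    intro u v
    rw [hgapp, hgapp]
    have e1 : B (TT B P r a u) (TT B P r a v) = 0 := TT_isot B P hBalt hP r a u v
    have e2 : B (TT B P r a u) v + B u (TT B P r a v) = 0 := TT_skew B P hBalt r a u v
    have expand : B (u + TT B P r a u) (v + TT B P r a v)
        = B u v + B u (TT B P r a v) + B (TT B P r a u) v
          + B (TT B P r a u) (TT B P r a v) := by
      simp only [map_add, LinearMap.add_apply]
      ring
    rw [expand, e1]
    linear_combination e2
  have hcomm : ∀ v : V, g (P v) = P (g v) := by
    intro v
    rw [hgapp, hgapp, map_add, TT_comm B P hP r a ha]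
  have hmap := hW g hsymp hcomm
  have hgw : g w ∈ W := by
    rw [← hmap]
    exact ⟨w, hw, by simp⟩
  have hfin : TT B P r a w = g w - w := by rw [hgapp]; abel
  rw [hfin]
  exact Submodule.sub_mem _ hgw hw

/-- Polarized version. -/
lemma TT_pair_mem (B : LinearMap.BilinForm K V) (P : Module.End K V)
    (hBalt : B.IsAlt) (hP : ∀ u v : V, B (P u) v = B u (P v))
    (W : Submodule K V) (hW : IsInvariantSubmodule B P W)
    (r : ℕ) (c y : V) (hc : (P ^ r) c = 0) (hy : (P ^ r) y = 0) (w : V) (hw : w ∈ W) :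
    (∑ i ∈ Finset.range r,
      (B w ((P ^ i) c) • (P ^ (r - 1 - i)) y + B w ((P ^ i) y) • (P ^ (r - 1 - i)) c)) ∈ W := by
  have hcy : (P ^ r) (c + y) = 0 := by rw [map_add, hc, hy, add_zero]
  have h1 := TT_mem B P hBalt hP W hW r (c + y) hcy w hw
  have h2 := TT_mem B P hBalt hP W hW r c hc w hw
  have h3 := TT_mem B P hBalt hP W hW r y hy w hw
  have key : (∑ i ∈ Finset.range r,
      (B w ((P ^ i) c) • (P ^ (r - 1 - i)) y + B w ((P ^ i) y) • (P ^ (r - 1 - i)) c))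
      = TT B P r (c + y) w - TT B P r c w - TT B P r y w := by
    rw [TT_apply, TT_apply, TT_apply, ← Finset.sum_sub_distrib, ← Finset.sum_sub_distrib]
    apply Finset.sum_congr rfl
    intro i _
    rw [map_add, map_add, map_add]
    rw [add_smul, smul_add, smul_add]
    abel
  rw [key]
  exact Submodule.sub_mem _ (Submodule.sub_mem _ h1 h2) h3

variable [FiniteDimensional K V]

/-- Orthogonality: if `x` is orthogonal to all of `ker (P^r)` then `x ∈ range (P^r)`. -/
lemma mem_range_of_perp (B : LinearMap.BilinForm K V) (P : Module.End K V)
    (hBalt : B.IsAlt) (hBnd : ∀ u : V, (∀ v : V, B u v = 0) → u = 0)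
    (hP : ∀ u v : V, B (P u) v = B u (P v)) (r : ℕ) (x : V)
    (hx : ∀ c : V, (P ^ r) c = 0 → B x c = 0) :
    x ∈ LinearMap.range (P ^ r) := by
  have hrefl : B.IsRefl := hBalt.isRefl
  have hnd : B.Nondegenerate := ⟨hBnd, fun y hy => hBnd y (fun x => hrefl _ _ (hy x))⟩
  have hle : LinearMap.range (P ^ r) ≤ B.orthogonal (LinearMap.ker (P ^ r)) := by
    rintro v ⟨z, rfl⟩
    rw [LinearMap.BilinForm.mem_orthogonal_iff]
    intro m hm
    rw [LinearMap.mem_ker] at hm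
    show B m ((P ^ r) z) = 0
    apply hrefl
    rw [iter_selfadj B P hP r, hm, LinearMap.map_zero]
  have h1 : Module.finrank K (B.orthogonal (LinearMap.ker (P ^ r)))
      = Module.finrank K V - Module.finrank K (LinearMap.ker (P ^ r)) :=
    LinearMap.BilinForm.finrank_orthogonal hnd _
  have h2 := LinearMap.finrank_range_add_finrank_ker (P ^ r)
  have heq : LinearMap.range (P ^ r) = B.orthogonal (LinearMap.ker (P ^ r)) := by
    apply Submodule.eq_of_le_of_finrank_le hle
    omega
  rw [heq, LinearMap.BilinForm.mem_orthogonal_iff]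
  intro m hm
  rw [LinearMap.mem_ker] at hm
  exact hrefl _ _ (hx m hm)

/-- The key lemma: if `P^{h+1} w = 0` and `P^h w ∉ im P^{h+1+l}`, then
`P^l (ker P^{h+1+l}) ⊆ W`.  Proved by descending induction on the depth `l`
(equivalently, ascending induction on `t` with `n ≤ l + t`). -/
lemma star_lemma (B : LinearMap.BilinForm K V) (P : Module.End K V)
    (hBalt : B.IsAlt) (hBnd : ∀ u : V, (∀ v : V, B u v = 0) → u = 0)
    (hP : ∀ u v : V, B (P u) v = B u (P v))
    (W : Submodule K V) (hW : IsInvariantSubmodule B P W)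
    (n : ℕ) (hn : P ^ n = 0) :
    ∀ t h l : ℕ, ∀ w : V, w ∈ W → (P ^ (h + 1)) w = 0 →
      ((P ^ h) w ∉ LinearMap.range (P ^ (h + 1 + l))) → n ≤ l + t →
      ∀ y : V, (P ^ (h + 1 + l)) y = 0 → (P ^ l) y ∈ W := by
  intro t
  induction t with
  | zero =>
      intro h l w _ _ _ hnl y _
      have hPl : P ^ l = P ^ (l - n) * P ^ n := by
        rw [← pow_add]
        congr 1
        omega
      have : (P ^ l) y = 0 := by
        rw [hPl, Module.End.mul_apply, hn, LinearMap.zero_apply, map_zero]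
      rw [this]
      exact Submodule.zero_mem W
  | succ t ih =>
      intro h l w hw hw1 hnr hnl y hy
      set r := h + 1 + l with hr
      -- find a dual vector c
      have hex : ∃ c : V, (P ^ r) c = 0 ∧ B ((P ^ h) w) c ≠ 0 := by
        by_contra hcon
        push_neg at hcon
        exact hnr (mem_range_of_perp B P hBalt hBnd hP r ((P ^ h) w) hcon)
      obtain ⟨c₀, hc₀k, hc₀⟩ := hex
      set c : V := (B ((P ^ h) w) c₀)⁻¹ • c₀ with hcdef
      have hck : (P ^ r) c = 0 := by rw [hcdef, map_smul, hc₀k, smul_zero]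
      have hc1 : B ((P ^ h) w) c = 1 := by
        rw [hcdef, map_smul, smul_eq_mul, inv_mul_cancel₀ hc₀]
      set α := B ((P ^ h) w) y with hα
      set z : V := y - (α / 2) • c with hzdef
      have hzk : (P ^ r) z = 0 := by
        rw [hzdef, map_sub, map_smul, hy, hck, smul_zero, sub_zero]
      have hS := TT_pair_mem B P hBalt hP W hW r c z hck hzk w hw
      set f : ℕ → V := fun i =>
        B w ((P ^ i) c) • (P ^ (r - 1 - i)) z + B w ((P ^ i) z) • (P ^ (r - 1 - i)) c with hf
      have hmem_h : h ∈ Finset.range r := by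
        rw [Finset.mem_range]; omega
      -- every term of the sum other than the `i = h` one lies in `W`
      have herase : (∑ i ∈ (Finset.range r).erase h, f i) ∈ W := by
        apply Submodule.sum_mem
        intro i hi
        obtain ⟨hineh, hir⟩ := Finset.mem_erase.mp hi
        rw [Finset.mem_range] at hir
        rcases lt_or_gt_of_ne hineh with hlt | hgt
        · -- i < h : junk terms, handled by the induction hypothesis at depth `l + 1`
          have hj : ∀ v : V, (P ^ r) v = 0 → ((P ^ (r - 1 - i)) v) ∈ W := by
            intro v hv
            have hrw : (P ^ (r - 1 - i)) v = (P ^ (l + 1)) ((P ^ (h - 1 - i)) v) := by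
              rw [← Module.End.mul_apply, ← pow_add]
              congr 2
              omega
            rw [hrw]
            apply ih h (l + 1) w hw hw1 _ (by omega)
            · rw [← Module.End.mul_apply, ← pow_add]
              have he : h + 1 + (l + 1) + (h - 1 - i) = (h - i) + r := by omega
              rw [he, pow_add, Module.End.mul_apply, hv, map_zero]
            · intro hcon
              apply hnr
              obtain ⟨x, hx⟩ := hcon
              refine ⟨P x, ?_⟩
              have he : h + 1 + (l + 1) = (h + 1 + l) + 1 := by omega
              rw [he, pow_succ, Module.End.mul_apply] at hx
              exact hx
          exact Submodule.add_mem _ (Submodule.smul_mem _ _ (hj z hzk))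
            (Submodule.smul_mem _ _ (hj c hck))
        · -- i > h : the coefficients vanish
          have hiw : (P ^ i) w = 0 := by
            have he : i = (i - (h + 1)) + (h + 1) := by omega
            rw [he, pow_add, Module.End.mul_apply, hw1, map_zero]
          have hc' : B w ((P ^ i) c) = 0 := by
            rw [← iter_selfadj B P hP i, hiw, LinearMap.map_zero₂]
          have hz' : B w ((P ^ i) z) = 0 := by
            rw [← iter_selfadj B P hP i, hiw, LinearMap.map_zero₂]
          have : f i = 0 := by
            rw [hf]
            simp only [hc', hz', zero_smul, add_zero]
          rw [this]
          exact Submodule.zero_mem W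
      -- hence the `i = h` term lies in `W`
      have hsum := Finset.sum_erase_add (Finset.range r) f hmem_h
      have hfh : f h ∈ W := by
        have : f h = (∑ i ∈ Finset.range r, f i) - ∑ i ∈ (Finset.range r).erase h, f i := by
          rw [← hsum]; abel
        rw [this]
        exact Submodule.sub_mem _ hS herase
      -- and the `i = h` term is exactly `P^l y`
      have hBwc : B w ((P ^ h) c) = 1 := by
        rw [← iter_selfadj B P hP h, hc1]
      have hBwz : B w ((P ^ h) z) = α / 2 := by
        rw [← iter_selfadj B P hP h, hzdef, map_sub, map_smul, ← hα, smul_eq_mul, hc1]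
        ring
      have hfh_eq : f h = (P ^ l) y := by
        rw [hf]
        simp only []
        have e1 : r - 1 - h = l := by omega
        rw [e1, hBwc, hBwz, one_smul, hzdef, map_sub, map_smul]
        rw [sub_add_cancel]
      rw [← hfh_eq]
      exact hfh

end Aux

/-- Every subspace of a finite-dimensional symplectic space `(V, B)` over `K = ℝ` or `ℂ`
invariant under `Aut(V, B, P)`, where `P` is a nilpotent `B`-self-adjoint operator, is a
finite sum of subspaces of the form `Ker P^k ∩ Im P^l`. -/
theorem invariant_submodule_eq_sum_ker_inf_range
    (K V : Type*) [RCLike K] [AddCommGroup V] [Module K V] [FiniteDimensional K V]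
    (B : LinearMap.BilinForm K V) (hBalt : B.IsAlt)
    (hBnd : ∀ u : V, (∀ v : V, B u v = 0) → u = 0)
    (P : Module.End K V) (hP : ∀ u v : V, B (P u) v = B u (P v))
    (hnil : IsNilpotent P)
    (W : Submodule K V) (hW : IsInvariantSubmodule B P W) :
    ∃ (s : ℕ) (k l : Fin s → ℕ),
      W = ⨆ i, LinearMap.ker (P ^ k i) ⊓ LinearMap.range (P ^ l i) := by
  classical
  obtain ⟨n, hn⟩ := hnil
  set pr : Fin ((n + 1) * (n + 1)) → Fin (n + 1) × Fin (n + 1) :=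
    fun i => finProdFinEquiv.symm i with hpr
  set kf : Fin ((n + 1) * (n + 1)) → ℕ := fun i =>
    if LinearMap.ker (P ^ ((pr i).1 : ℕ)) ⊓ LinearMap.range (P ^ ((pr i).2 : ℕ)) ≤ W
    then ((pr i).1 : ℕ) else 0 with hkf
  set lf : Fin ((n + 1) * (n + 1)) → ℕ := fun i => ((pr i).2 : ℕ) with hlf
  refine ⟨(n + 1) * (n + 1), kf, lf, le_antisymm ?_ ?_⟩
  · -- W ≤ ⨆ ...
    have key : ∀ h : ℕ, ∀ w : V, w ∈ W → (P ^ h) w = 0 →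
        w ∈ ⨆ i, LinearMap.ker (P ^ kf i) ⊓ LinearMap.range (P ^ lf i) := by
      intro h
      induction h with
      | zero =>
          intro w _ h0
          rw [pow_zero, Module.End.one_apply] at h0
          rw [h0]
          exact Submodule.zero_mem _
      | succ h ihh =>
          intro w hw hw1
          by_cases h0 : (P ^ h) w = 0
          · exact ihh w hw h0
          · have hhn : h < n := by
              by_contra hcon
              push_neg at hcon
              apply h0
              have he : h = (h - n) + n := by omega
              rw [he, pow_add, Module.End.mul_apply, hn, LinearMap.zero_apply, map_zero]
            set l₀ := Nat.findGreatest
              (fun l => (P ^ h) w ∈ LinearMap.range (P ^ (h + l))) n with hl₀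
            have hspec : (P ^ h) w ∈ LinearMap.range (P ^ (h + l₀)) := by
              rw [hl₀]
              exact Nat.findGreatest_spec
                (P := fun l => (P ^ h) w ∈ LinearMap.range (P ^ (h + l)))
                (m := 0) (Nat.zero_le n) (by simpa using ⟨w, rfl⟩)
            have hl₀n : l₀ ≤ n := Nat.findGreatest_le n
            have hl₀lt : l₀ < n := by
              rcases Nat.lt_or_ge l₀ n with h' | h'
              · exact h'
              · exfalso
                have hl₀eq : l₀ = n := le_antisymm hl₀n h'
                rw [hl₀eq] at hspec
                obtain ⟨x, hx⟩ := hspec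
                rw [pow_add, Module.End.mul_apply, hn, LinearMap.zero_apply, map_zero] at hx
                exact h0 hx.symm
            have hnot : (P ^ h) w ∉ LinearMap.range (P ^ (h + 1 + l₀)) := by
              have hgr := Nat.findGreatest_is_greatest
                (P := fun l => (P ^ h) w ∈ LinearMap.range (P ^ (h + l)))
                (n := n) (k := l₀ + 1) (by omega) (by omega)
              intro hcon
              apply hgr
              have he : h + (l₀ + 1) = h + 1 + l₀ := by omega
              rw [he]
              exact hcon
            have hstar := star_lemma B P hBalt hBnd hP W hW n hn n h l₀ w hw hw1 hnot
              (by omega)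
            -- the subspace ker P^{h+1} ⊓ range P^{l₀} is contained in W
            have hKW : LinearMap.ker (P ^ (h + 1)) ⊓ LinearMap.range (P ^ l₀) ≤ W := by
              intro v hv
              obtain ⟨hv1', hv2⟩ := Submodule.mem_inf.mp hv
              obtain ⟨x, hx⟩ := hv2
              have hv1 : (P ^ (h + 1)) v = 0 := LinearMap.mem_ker.mp hv1'
              have hx0 : (P ^ (h + 1 + l₀)) x = 0 := by
                have he : h + 1 + l₀ = (h + 1) + l₀ := by omega
                rw [he, pow_add, Module.End.mul_apply, hx, hv1]
              have := hstar x hx0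
              rw [hx] at this
              exact this
            -- the corresponding index
            set i₀ : Fin ((n + 1) * (n + 1)) :=
              finProdFinEquiv (⟨h + 1, by omega⟩, ⟨l₀, by omega⟩) with hi₀
            have hpri₀ : pr i₀ = (⟨h + 1, by omega⟩, ⟨l₀, by omega⟩) := by
              rw [hpr, hi₀]
              exact Equiv.symm_apply_apply _ _
            have hkfi₀ : kf i₀ = h + 1 := by
              rw [hkf]
              simp only [hpri₀]
              rw [if_pos hKW]
            have hlfi₀ : lf i₀ = l₀ := by
              rw [hlf]
              simp only [hpri₀]
            have hterm : LinearMap.ker (P ^ (h + 1)) ⊓ LinearMap.range (P ^ l₀)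
                ≤ ⨆ i, LinearMap.ker (P ^ kf i) ⊓ LinearMap.range (P ^ lf i) := by
              have := le_iSup
                (fun i => LinearMap.ker (P ^ kf i) ⊓ LinearMap.range (P ^ lf i)) i₀
              rw [hkfi₀, hlfi₀] at this
              exact this
            obtain ⟨x, hx⟩ := hspec
            set u : V := (P ^ l₀) x with hu
            have huK : u ∈ LinearMap.ker (P ^ (h + 1)) ⊓ LinearMap.range (P ^ l₀) := by
              refine Submodule.mem_inf.mpr ⟨?_, ⟨x, rfl⟩⟩
              · rw [LinearMap.mem_ker]
                have e1 : (P ^ (h + 1)) u = P ((P ^ (h + l₀)) x) := by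
                  rw [hu, ← Module.End.mul_apply, ← pow_add]
                  have he : h + 1 + l₀ = (h + l₀) + 1 := by omega
                  rw [he, pow_succ', Module.End.mul_apply]
                rw [e1, hx, ← Module.End.mul_apply, ← pow_succ', hw1]
            have huW : u ∈ W := hKW huK
            have hw' : w - u ∈ W := Submodule.sub_mem _ hw huW
            have hw'0 : (P ^ h) (w - u) = 0 := by
              rw [map_sub]
              have : (P ^ h) u = (P ^ h) w := by
                rw [hu, ← Module.End.mul_apply, ← pow_add, hx]
              rw [this, sub_self]
            have h1 := ihh (w - u) hw' hw'0
            have h2 : u ∈ ⨆ i, LinearMap.ker (P ^ kf i) ⊓ LinearMap.range (P ^ lf i) :=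
              hterm huK
            have : w = (w - u) + u := by abel
            rw [this]
            exact Submodule.add_mem _ h1 h2
    intro w hw
    have hwn : (P ^ n) w = 0 := by rw [hn, LinearMap.zero_apply]
    exact key n w hw hwn
  · -- ⨆ ... ≤ W
    apply iSup_le
    intro i
    by_cases hc : LinearMap.ker (P ^ ((pr i).1 : ℕ)) ⊓ LinearMap.range (P ^ ((pr i).2 : ℕ)) ≤ W
    · have h1 : kf i = ((pr i).1 : ℕ) := by rw [hkf]; simp only [if_pos hc]
      have h2 : lf i = ((pr i).2 : ℕ) := by rw [hlf]
      rw [h1, h2]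
      exact hc
    · have h1 : kf i = 0 := by rw [hkf]; simp only [if_neg hc]
      rw [h1, pow_zero]
      have : LinearMap.ker (1 : Module.End K V) = ⊥ := LinearMap.ker_id
      rw [this, bot_inf_eq]
      exact bot_le
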